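/- Tie-surface continuum of equilibria: in the scalar + rank-one block model with s' = Λ - μs - β₁si₁ - sℓᵀz, i₁' = (β₁s - v₁)i₁, z' = (s wℓᵀ - V)z, if R₁ = R_b > 1 (equivalently v₁/β₁ = 1/𝓡_b with 𝓡_b = ℓᵀV⁻¹w and Λ𝓡_b/μ > 1... i.e. Λ - μ/𝓡_b > 0), then for every ξ ∈ (0, Λ - μ/𝓡_b), the point E(ξ) = (1/𝓡_b, (Λ - μ/𝓡_b - ξ)/v₁, ξ·V⁻¹w) is an equilibrium of the system with all components nonnegative and s-component and i₁-component positive for ξ in the open interval. -/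

import Mathlib

theorem tie_surface_continuum (n : ℕ) (hn : 0 < n)
    (w ℓ v : Fin n → ℝ) (Λ μ β₁ v₁ : ℝ)
    (hw : ∀ i, 0 < w i) (hℓ : ∀ i, 0 < ℓ i) (hv : ∀ i, 0 < v i)
    (hwsum : ∑ i, w i = 1)
    (hΛ : 0 < Λ) (hμ : 0 < μ) (hβ₁ : 0 < β₁) (hv₁ : 0 < v₁)
    (R : ℝ) (hR : R = ∑ j, ℓ j * (v j)⁻¹ * w j)
    (htie : v₁ / β₁ = 1 / R) (hthr : μ / R < Λ)
    (ξ : ℝ) (hξ : ξ ∈ Set.Ioo 0 (Λ - μ / R)) :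
    let sstar : ℝ := 1 / R
    let istar : ℝ := (Λ - μ / R - ξ) / v₁
    let zstar : Fin n → ℝ := fun j => ξ * (v j)⁻¹ * w j
    (Λ - μ * sstar - β₁ * sstar * istar - sstar * (∑ j, ℓ j * zstar j) = 0) ∧
    ((β₁ * sstar - v₁) * istar = 0) ∧
    (∀ i, sstar * w i * (∑ j, ℓ j * zstar j) - v i * zstar i = 0) ∧
    0 < sstar ∧ 0 < istar ∧ ∀ j, 0 ≤ zstar j := by
  intro sstar istar zstar
  obtain ⟨hξ0, hξ1⟩ := hξ
  have hR0 : 0 < R := by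
    rw [hR]
    apply Finset.sum_pos
    · intro j _
      exact mul_pos (mul_pos (hℓ j) (inv_pos.2 (hv j))) (hw j)
    · have : Nonempty (Fin n) := Fin.pos_iff_nonempty.mp hn
      exact Finset.univ_nonempty
  have hv1 : v₁ = β₁ / R := by
    field_simp at htie ⊢
    linarith [htie]
  have hsum : (∑ j, ℓ j * zstar j) = ξ * R := by
    rw [hR, Finset.mul_sum]
    exact Finset.sum_congr rfl fun j _ => by ring
  refine ⟨?_, ?_, ?_, ?_, ?_, ?_⟩
  · show Λ - μ * (1/R) - β₁ * (1/R) * ((Λ - μ / R - ξ) / v₁) - (1/R) * (∑ j, ℓ j * zstar j) = 0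
    rw [hsum, hv1]
    field_simp
    ring
  · show (β₁ * (1/R) - v₁) * _ = 0
    rw [hv1]
    field_simp
    ring
  · intro i
    show (1/R) * w i * (∑ j, ℓ j * zstar j) - v i * (ξ * (v i)⁻¹ * w i) = 0
    rw [hsum]
    field_simp [(hv i).ne']
    ring
  · exact one_div_pos.2 hR0
  · exact div_pos (by linarith) hv₁
  · intro j
    exact le_of_lt (mul_pos (mul_pos hξ0 (inv_pos.2 (hv j))) (hw j))
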